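/- arXiv:1212.1873 — 3 statements merged into one kernel-verified Lean document; each statement's English description precedes it below -/
import Mathlib

section
/- Let X₀, Z₁, Z₂, … be independent random variables taking values in a countable abelian group, with the Zₙ identically distributed, all with finite entropy, and let Xₙ = X₀ + Z₁ + ⋯ + Zₙ. Then the conditional entropy H(Z₁ | Xₙ) is non-decreasing in n. -/
open MeasureTheory ProbabilityTheory

/-- Shannon entropy of a discrete random variable `X` on `(Ω, μ)`. -/
noncomputable def rvEntropy {Ω Γ : Type*} [MeasurableSpace Ω] (μ : Measure Ω)
    (X : Ω → Γ) : ℝ :=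
  ∑' g : Γ, Real.negMulLog (μ (X ⁻¹' {g})).toReal

namespace CEMaux

open Real
open scoped ENNReal

set_option linter.unusedSectionVars false

variable {Ω : Type*} [MeasurableSpace Ω]
variable {A : Type*} [MeasurableSpace A] [MeasurableSingletonClass A] [Countable A]
variable {B : Type*} [MeasurableSpace B] [MeasurableSingletonClass B] [Countable B]
variable {C : Type*} [MeasurableSpace C] [MeasurableSingletonClass C] [Countable C]

/-- point masses of a random variable -/
noncomputable def pm (μ : Measure Ω) (X : Ω → A) (a : A) : ℝ≥0∞ := μ (X ⁻¹' {a})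

/-- entropy, valued in `ℝ≥0∞` -/
noncomputable def entNN (μ : Measure Ω) (X : Ω → A) : ℝ≥0∞ :=
  ∑' a, ENNReal.ofReal (Real.negMulLog (pm μ X a).toReal)

/-- conditional entropy `H(U|V)`, valued in `ℝ≥0∞` -/
noncomputable def cEnt (μ : Measure Ω) (U : Ω → A) (V : Ω → B) : ℝ≥0∞ :=
  ∑' p : A × B, ENNReal.ofReal ((pm μ (fun ω => (U ω, V ω)) p).toReal *
    Real.log ((pm μ V p.2).toReal / (pm μ (fun ω => (U ω, V ω)) p).toReal))

variable {μ : Measure Ω}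

lemma pm_ne_top [IsFiniteMeasure μ] (X : Ω → A) (a : A) : pm μ X a ≠ ⊤ :=
  (measure_lt_top μ _).ne

lemma pm_le_one [IsProbabilityMeasure μ] (X : Ω → A) (a : A) : (pm μ X a).toReal ≤ 1 := by
  rw [show (1:ℝ) = (1:ℝ≥0∞).toReal by simp]
  exact ENNReal.toReal_mono ENNReal.one_ne_top (prob_le_one)

lemma pm_comp {T : Ω → A} (hT : Measurable T) (f : A → B) (b : B) :
    pm μ (fun ω => f (T ω)) b = ∑' a : (f ⁻¹' {b} : Set A), pm μ T ↑a := by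
  have hset : (fun ω => f (T ω)) ⁻¹' {b} = ⋃ a : (f ⁻¹' {b} : Set A), T ⁻¹' {(a : A)} := by
    ext ω
    simp only [Set.mem_preimage, Set.mem_singleton_iff, Set.mem_iUnion]
    exact ⟨fun h => ⟨⟨T ω, h⟩, rfl⟩, fun ⟨a, ha⟩ => ha ▸ a.2⟩
  rw [pm, hset, measure_iUnion ?_ (fun a => hT (measurableSet_singleton _))]
  · rfl
  · intro a a' hne
    simp only [Function.onFun, Set.disjoint_left]
    intro ω h1 h2
    simp only [Set.mem_preimage, Set.mem_singleton_iff] at h1 h2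
    exact hne (Subtype.ext (h1 ▸ h2 ▸ rfl))

lemma pm_pair_comp {U : Ω → A} {V : Ω → B} (hU : Measurable U) (hV : Measurable V)
    (f : B → C) (u : A) (c : C) :
    pm μ (fun ω => (U ω, f (V ω))) (u, c)
      = ∑' v : (f ⁻¹' {c} : Set B), pm μ (fun ω => (U ω, V ω)) (u, ↑v) := by
  have hset : (fun ω => (U ω, f (V ω))) ⁻¹' {(u, c)}
      = ⋃ v : (f ⁻¹' {c} : Set B), (fun ω => (U ω, V ω)) ⁻¹' {(u, (v : B))} := by
    ext ω
    simp only [Set.mem_preimage, Set.mem_singleton_iff, Set.mem_iUnion, Prod.ext_iff]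
    constructor
    · rintro ⟨h1, h2⟩; exact ⟨⟨V ω, h2⟩, h1, rfl⟩
    · rintro ⟨v, h1, h2⟩; exact ⟨h1, h2 ▸ v.2⟩
  rw [pm, hset, measure_iUnion ?_ (fun v => (hU.prodMk hV) (measurableSet_singleton _))]
  · rfl
  · intro v v' hne
    simp only [Function.onFun, Set.disjoint_left]
    intro ω h1 h2
    simp only [Set.mem_preimage, Set.mem_singleton_iff, Prod.ext_iff] at h1 h2
    exact hne (Subtype.ext (h1.2 ▸ h2.2 ▸ rfl))

lemma pm_snd {U : Ω → A} {V : Ω → B} (hU : Measurable U) (hV : Measurable V) (v : B) :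
    ∑' u : A, pm μ (fun ω => (U ω, V ω)) (u, v) = pm μ V v := by
  have hset : V ⁻¹' {v} = ⋃ u : A, (fun ω => (U ω, V ω)) ⁻¹' {(u, v)} := by
    ext ω
    simp only [Set.mem_preimage, Set.mem_singleton_iff, Set.mem_iUnion, Prod.ext_iff]
    exact ⟨fun h => ⟨U ω, rfl, h⟩, fun ⟨u, _, h⟩ => h⟩
  rw [pm, hset, measure_iUnion ?_ (fun u => (hU.prodMk hV) (measurableSet_singleton _))]
  · rfl
  · intro u u' hne
    simp only [Function.onFun, Set.disjoint_left]
    intro ω h1 h2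
    simp only [Set.mem_preimage, Set.mem_singleton_iff, Prod.ext_iff] at h1 h2
    exact hne (h1.1 ▸ h2.1 ▸ rfl)

lemma pm_total [IsProbabilityMeasure μ] {X : Ω → A} (hX : Measurable X) :
    ∑' a : A, pm μ X a = 1 := by
  have hset : (Set.univ : Set Ω) = ⋃ a : A, X ⁻¹' {a} := by
    ext ω; simp
  rw [show (1:ℝ≥0∞) = μ Set.univ from (measure_univ).symm, hset,
    measure_iUnion ?_ (fun a => hX (measurableSet_singleton _))]
  · rfl
  · intro a a' hne
    simp only [Function.onFun, Set.disjoint_left]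
    intro ω h1 h2
    simp only [Set.mem_preimage, Set.mem_singleton_iff] at h1 h2
    exact hne (h1 ▸ h2 ▸ rfl)

lemma pm_pair_le_snd {U : Ω → A} {V : Ω → B} (u : A) (v : B) :
    pm μ (fun ω => (U ω, V ω)) (u, v) ≤ pm μ V v := by
  apply measure_mono
  intro ω h
  simp only [Set.mem_preimage, Set.mem_singleton_iff, Prod.ext_iff] at h ⊢
  exact h.2

lemma summable_pm [IsProbabilityMeasure μ] {X : Ω → A} (hX : Measurable X) :
    Summable fun a => (pm μ X a).toReal :=
  ENNReal.summable_toReal (by rw [pm_total hX]; exact ENNReal.one_ne_top)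

lemma tsum_fiber (f : B → C) (g : B → ℝ≥0∞) :
    ∑' c : C, ∑' v : (f ⁻¹' {c} : Set B), g ↑v = ∑' v : B, g v := by
  rw [← (Equiv.sigmaFiberEquiv f).tsum_eq g, ENNReal.tsum_sigma']
  rfl

/-- countable log-sum inequality, in `ℝ≥0∞`-coded form -/
lemma logSum {ι : Type*} (a b : ι → ℝ) (h0 : ∀ i, 0 ≤ a i) (hab : ∀ i, a i ≤ b i)
    (hb : Summable b) :
    ∑' i, ENNReal.ofReal (a i * Real.log (b i / a i))
      ≤ ENNReal.ofReal ((∑' i, a i) * Real.log ((∑' i, b i) / (∑' i, a i))) := by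
  have hb0 : ∀ i, 0 ≤ b i := fun i => (h0 i).trans (hab i)
  have ha : Summable a := Summable.of_nonneg_of_le h0 hab hb
  set A := ∑' i, a i with hA
  set B := ∑' i, b i with hB
  have hA0 : 0 ≤ A := tsum_nonneg h0
  have hB0 : 0 ≤ B := tsum_nonneg hb0
  have hAB : A ≤ B := Summable.tsum_le_tsum hab ha hb
  have hterm0 : ∀ i, 0 ≤ a i * Real.log (b i / a i) := by
    intro i
    rcases eq_or_lt_of_le (h0 i) with h | h
    · simp [← h]
    · exact mul_nonneg (h0 i) (Real.log_nonneg ((one_le_div h).mpr (hab i)))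
  rcases eq_or_lt_of_le hB0 with hBz | hBpos
  · have hbz : ∀ i, b i = 0 := by
      intro i
      have := Summable.le_tsum hb i (fun j _ => hb0 j)
      have := hb0 i
      nlinarith [hB ▸ hBz]
    have haz : ∀ i, a i = 0 := fun i => le_antisymm ((hab i).trans (hbz i).le) (h0 i)
    simp [haz]
  · set c : ι → ℝ := fun i => b i * (A / B) - a i + a i * Real.log (B / A) with hc
    have key : ∀ i, a i * Real.log (b i / a i) ≤ c i := by
      intro i
      rcases eq_or_lt_of_le (h0 i) with h | h
      · simp [hc, ← h]
        exact mul_nonneg (hb0 i) (div_nonneg hA0 hB0)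
      · have hbi : 0 < b i := lt_of_lt_of_le h (hab i)
        have hApos : 0 < A := lt_of_lt_of_le h (Summable.le_tsum ha i (fun j _ => h0 j))
        have harg : 0 < b i * A / (a i * B) := by positivity
        have hlog : Real.log (b i / a i) - Real.log (B / A) = Real.log (b i * A / (a i * B)) := by
          rw [← Real.log_div (by positivity) (by positivity)]
          congr 1
          field_simp
        have : Real.log (b i * A / (a i * B)) ≤ b i * A / (a i * B) - 1 :=
          Real.log_le_sub_one_of_pos harg
        have h2 : a i * (Real.log (b i / a i) - Real.log (B / A)) ≤ b i * (A / B) - a i := by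
          calc a i * (Real.log (b i / a i) - Real.log (B / A))
              = a i * Real.log (b i * A / (a i * B)) := by rw [hlog]
            _ ≤ a i * (b i * A / (a i * B) - 1) := by
                exact mul_le_mul_of_nonneg_left this (h0 i)
            _ = b i * (A / B) - a i := by field_simp
        nlinarith
    have hc0 : ∀ i, 0 ≤ c i := fun i => (hterm0 i).trans (key i)
    have hcs : Summable c := by
      apply Summable.add
      · exact (hb.mul_right _).sub ha
      · exact ha.mul_right _
    have hct : ∑' i, c i = A * Real.log (B / A) := by
      rw [hc, Summable.tsum_add ((hb.mul_right _).sub ha) (ha.mul_right _),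
        Summable.tsum_sub (hb.mul_right _) ha, tsum_mul_right, tsum_mul_right, ← hA, ← hB]
      field_simp
      ring
    calc ∑' i, ENNReal.ofReal (a i * Real.log (b i / a i))
        ≤ ∑' i, ENNReal.ofReal (c i) := by
          exact ENNReal.tsum_le_tsum (fun i => ENNReal.ofReal_le_ofReal (key i))
      _ = ENNReal.ofReal (∑' i, c i) := (ENNReal.ofReal_tsum_of_nonneg hc0 hcs).symm
      _ = ENNReal.ofReal (A * Real.log (B / A)) := by rw [hct]

lemma ofReal_negMulLog_split {x y : ℝ} (hx : 0 ≤ x) (hxy : x ≤ y) (hy : y ≤ 1) :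
    ENNReal.ofReal (negMulLog x)
      = ENNReal.ofReal (x * Real.log (y / x)) + ENNReal.ofReal (x * (-Real.log y)) := by
  rcases eq_or_lt_of_le hx with h | h
  · simp [← h, negMulLog]
  · have hy0 : 0 < y := lt_of_lt_of_le h hxy
    rw [← ENNReal.ofReal_add
        (mul_nonneg h.le (Real.log_nonneg ((one_le_div h).mpr hxy)))
        (mul_nonneg h.le (neg_nonneg.mpr (Real.log_nonpos hy0.le hy)))]
    congr 1
    rw [Real.log_div hy0.ne' h.ne', negMulLog]
    ring

/-- chain rule `H(U,V) = H(U|V) + H(V)` -/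
lemma entNN_pair [IsProbabilityMeasure μ] {U : Ω → A} {V : Ω → B}
    (hU : Measurable U) (hV : Measurable V) :
    entNN μ (fun ω => (U ω, V ω)) = cEnt μ U V + entNN μ V := by
  have hsplit : ∀ p : A × B,
      ENNReal.ofReal (negMulLog (pm μ (fun ω => (U ω, V ω)) p).toReal)
        = ENNReal.ofReal ((pm μ (fun ω => (U ω, V ω)) p).toReal *
            Real.log ((pm μ V p.2).toReal / (pm μ (fun ω => (U ω, V ω)) p).toReal))
          + pm μ (fun ω => (U ω, V ω)) p * ENNReal.ofReal (-Real.log (pm μ V p.2).toReal) := by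
    intro p
    rw [ofReal_negMulLog_split ENNReal.toReal_nonneg
      (ENNReal.toReal_mono (pm_ne_top _ _) (by rcases p with ⟨u,v⟩; exact pm_pair_le_snd u v))
      (pm_le_one V p.2)]
    congr 1
    rw [ENNReal.ofReal_mul ENNReal.toReal_nonneg, ENNReal.ofReal_toReal (pm_ne_top _ _)]
  rw [entNN]
  simp only [hsplit]
  rw [ENNReal.tsum_add]
  congr 1
  rw [ENNReal.tsum_prod', ENNReal.tsum_comm]
  calc ∑' (v : B) (u : A), pm μ (fun ω => (U ω, V ω)) (u, v)
          * ENNReal.ofReal (-Real.log (pm μ V v).toReal)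
      = ∑' v : B, pm μ V v * ENNReal.ofReal (-Real.log (pm μ V v).toReal) := by
        congr 1; funext v
        rw [ENNReal.tsum_mul_right, pm_snd hU hV]
    _ = entNN μ V := by
        rw [entNN]
        congr 1; funext v
        nth_rewrite 1 [← ENNReal.ofReal_toReal (a := pm μ V v) (pm_ne_top _ _)]
        rw [← ENNReal.ofReal_mul ENNReal.toReal_nonneg]
        congr 1
        rw [negMulLog]; ring

/-- data processing: `H(U|V) ≤ H(U|f(V))` -/
lemma cEnt_comp_le [IsProbabilityMeasure μ] {U : Ω → A} {V : Ω → B}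
    (hU : Measurable U) (hV : Measurable V) (f : B → C) :
    cEnt μ U V ≤ cEnt μ U (fun ω => f (V ω)) := by
  rw [cEnt, cEnt, ENNReal.tsum_prod', ENNReal.tsum_prod']
  apply ENNReal.tsum_le_tsum
  intro u
  rw [← tsum_fiber f (fun v => ENNReal.ofReal ((pm μ (fun ω => (U ω, V ω)) (u, v)).toReal *
    Real.log ((pm μ V v).toReal / (pm μ (fun ω => (U ω, V ω)) (u, v)).toReal)))]
  apply ENNReal.tsum_le_tsum
  intro c
  have hsub : Summable fun v : (f ⁻¹' {c} : Set B) => (pm μ V ↑v).toReal :=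
    (summable_pm hV).comp_injective Subtype.val_injective
  have key := logSum (fun v : (f ⁻¹' {c} : Set B) => (pm μ (fun ω => (U ω, V ω)) (u, ↑v)).toReal)
    (fun v => (pm μ V ↑v).toReal)
    (fun v => ENNReal.toReal_nonneg)
    (fun v => ENNReal.toReal_mono (pm_ne_top _ _) (pm_pair_le_snd (U := U) (V := V) u ↑v))
    hsub
  have hA : ∑' v : (f ⁻¹' {c} : Set B), (pm μ (fun ω => (U ω, V ω)) (u, ↑v)).toReal
      = (pm μ (fun ω => (U ω, f (V ω))) (u, c)).toReal := by
    rw [pm_pair_comp hU hV f u c, ENNReal.tsum_toReal_eq (fun v => pm_ne_top _ _)]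
  have hB : ∑' v : (f ⁻¹' {c} : Set B), (pm μ V ↑v).toReal
      = (pm μ (fun ω => f (V ω)) c).toReal := by
    rw [pm_comp hV f c, ENNReal.tsum_toReal_eq (fun v => pm_ne_top _ _)]
  rw [hA, hB] at key
  exact key

lemma cEnt_le_entNN [IsProbabilityMeasure μ] {U : Ω → A} {V : Ω → B}
    (hU : Measurable U) (hV : Measurable V) :
    cEnt μ U V ≤ entNN μ U := by
  refine le_trans (cEnt_comp_le hU hV (fun _ => Unit.unit)) (le_of_eq ?_)
  have h1 : ∀ z : Unit, pm μ (fun _ : Ω => Unit.unit) z = 1 := by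
    intro z
    rw [pm, show (fun _ : Ω => Unit.unit) ⁻¹' {z} = Set.univ by ext; simp, measure_univ]
  have h2 : ∀ (u : A) (z : Unit), pm μ (fun ω => (U ω, Unit.unit)) (u, z) = pm μ U u := by
    intro u z
    rw [pm, pm]
    congr 1
    ext ω
    simp [Prod.ext_iff]
  rw [cEnt, entNN, ENNReal.tsum_prod']
  congr 1; funext u
  rw [tsum_eq_single Unit.unit (fun z hz => absurd (Subsingleton.elim z Unit.unit) hz)]
  rw [h1, h2]
  congr 1
  rw [ENNReal.toReal_one, negMulLog, one_div, Real.log_inv]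
  ring

lemma entNN_pair_le [IsProbabilityMeasure μ] {U : Ω → A} {V : Ω → B}
    (hU : Measurable U) (hV : Measurable V) :
    entNN μ (fun ω => (U ω, V ω)) ≤ entNN μ U + entNN μ V := by
  rw [entNN_pair hU hV]
  exact add_le_add_left (cEnt_le_entNN hU hV) _

lemma entNN_comp_le [IsProbabilityMeasure μ] {T : Ω → A} (hT : Measurable T) (f : A → B) :
    entNN μ (fun ω => f (T ω)) ≤ entNN μ T := by
  rw [entNN, entNN, ← tsum_fiber f (fun a => ENNReal.ofReal (negMulLog (pm μ T a).toReal))]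
  apply ENNReal.tsum_le_tsum
  intro b
  by_cases hq : pm μ (fun ω => f (T ω)) b = 0
  · simp [hq, negMulLog]
  · set qr := (pm μ (fun ω => f (T ω)) b).toReal with hqrdef
    have hqpos : 0 < qr := ENNReal.toReal_pos hq (pm_ne_top _ _)
    have hq1 : qr ≤ 1 := pm_le_one _ b
    have hsub : Summable fun v : (f ⁻¹' {b} : Set A) => (pm μ T ↑v).toReal :=
      (summable_pm hT).comp_injective Subtype.val_injective
    have hqr : qr = ∑' v : (f ⁻¹' {b} : Set A), (pm μ T ↑v).toReal := by
      rw [hqrdef, pm_comp hT f b, ENNReal.tsum_toReal_eq (fun v => pm_ne_top _ _)]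
    have hc : 0 ≤ -Real.log qr := neg_nonneg.mpr (Real.log_nonpos hqpos.le hq1)
    calc ENNReal.ofReal (negMulLog qr)
        = ENNReal.ofReal (∑' v : (f ⁻¹' {b} : Set A), (pm μ T ↑v).toReal * (-Real.log qr)) := by
          rw [tsum_mul_right, ← hqr]
          congr 1
          rw [negMulLog]; ring
      _ = ∑' v : (f ⁻¹' {b} : Set A), ENNReal.ofReal ((pm μ T ↑v).toReal * (-Real.log qr)) :=
          ENNReal.ofReal_tsum_of_nonneg
            (fun v => mul_nonneg ENNReal.toReal_nonneg hc) (hsub.mul_right _)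
      _ ≤ ∑' v : (f ⁻¹' {b} : Set A), ENNReal.ofReal (negMulLog (pm μ T ↑v).toReal) := by
          apply ENNReal.tsum_le_tsum
          intro v
          apply ENNReal.ofReal_le_ofReal
          rcases eq_or_lt_of_le (ENNReal.toReal_nonneg (a := pm μ T ↑v)) with h | h
          · simp [← h, negMulLog]
          · rw [negMulLog, neg_mul_comm]
            apply mul_le_mul_of_nonneg_left _ h.le
            apply neg_le_neg
            apply Real.log_le_log h
            rw [hqr]
            exact Summable.le_tsum hsub v (fun j _ => ENNReal.toReal_nonneg)

lemma cEnt_of_indep [IsProbabilityMeasure μ] {U : Ω → A} {V : Ω → B} {S : Ω → C}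
    (hU : Measurable U) (hV : Measurable V) (hS : Measurable S)
    (h : IndepFun (fun ω => (U ω, V ω)) S μ) :
    cEnt μ U (fun ω => (V ω, S ω)) = cEnt μ U V := by
  have hP : ∀ (u : A) (v : B) (s : C),
      pm μ (fun ω => (U ω, (V ω, S ω))) (u, (v, s))
        = pm μ (fun ω => (U ω, V ω)) (u, v) * pm μ S s := by
    intro u v s
    rw [pm, pm, pm,
      show (fun ω => (U ω, (V ω, S ω))) ⁻¹' {(u, (v, s))}
          = (fun ω => (U ω, V ω)) ⁻¹' {(u, v)} ∩ S ⁻¹' {s} by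
        ext ω; simp only [Set.mem_preimage, Set.mem_singleton_iff, Set.mem_inter_iff,
          Prod.ext_iff]; tauto]
    exact h.measure_inter_preimage_eq_mul _ _ (measurableSet_singleton _)
      (measurableSet_singleton _)
  have hQ : ∀ (v : B) (s : C),
      pm μ (fun ω => (V ω, S ω)) (v, s) = pm μ V v * pm μ S s := by
    intro v s
    have hset2 : (fun ω => (U ω, V ω)) ⁻¹' (Set.univ ×ˢ {v}) = V ⁻¹' {v} := by
      ext ω
      simp only [Set.mem_preimage, Set.mem_prod, Set.mem_univ, Set.mem_singleton_iff, true_and]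
    rw [pm, pm, pm,
      show (fun ω => (V ω, S ω)) ⁻¹' {(v, s)}
          = (fun ω => (U ω, V ω)) ⁻¹' (Set.univ ×ˢ {v}) ∩ S ⁻¹' {s} by
        ext ω; simp [Prod.ext_iff, eq_comm],
      h.measure_inter_preimage_eq_mul _ _
        (MeasurableSet.univ.prod (measurableSet_singleton _)) (measurableSet_singleton _),
      hset2]
  have hterm : ∀ (u : A) (v : B) (s : C),
      ENNReal.ofReal ((pm μ (fun ω => (U ω, (V ω, S ω))) (u, (v, s))).toReal *
          Real.log ((pm μ (fun ω => (V ω, S ω)) (v, s)).toReal /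
            (pm μ (fun ω => (U ω, (V ω, S ω))) (u, (v, s))).toReal))
        = pm μ S s * ENNReal.ofReal ((pm μ (fun ω => (U ω, V ω)) (u, v)).toReal *
            Real.log ((pm μ V v).toReal / (pm μ (fun ω => (U ω, V ω)) (u, v)).toReal)) := by
    intro u v s
    rw [hP, hQ]
    by_cases hs : pm μ S s = 0
    · simp [hs]
    · have hrpos : 0 < (pm μ S s).toReal := ENNReal.toReal_pos hs (pm_ne_top _ _)
      rw [ENNReal.toReal_mul, ENNReal.toReal_mul,
        mul_div_mul_right _ _ hrpos.ne']
      nth_rewrite 2 [← ENNReal.ofReal_toReal (a := pm μ S s) (pm_ne_top _ _)]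
      rw [← ENNReal.ofReal_mul ENNReal.toReal_nonneg]
      congr 1
      ring
  rw [cEnt, cEnt, ENNReal.tsum_prod']
  have key : ∀ u : A, (∑' q : B × C,
      ENNReal.ofReal ((pm μ (fun ω => (U ω, (V ω, S ω))) (u, q)).toReal *
        Real.log ((pm μ (fun ω => (V ω, S ω)) q).toReal /
          (pm μ (fun ω => (U ω, (V ω, S ω))) (u, q)).toReal)))
      = ∑' v : B, ENNReal.ofReal ((pm μ (fun ω => (U ω, V ω)) (u, v)).toReal *
          Real.log ((pm μ V v).toReal / (pm μ (fun ω => (U ω, V ω)) (u, v)).toReal)) := by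
    intro u
    rw [ENNReal.tsum_prod']
    congr 1; funext v
    calc ∑' s : C, ENNReal.ofReal ((pm μ (fun ω => (U ω, (V ω, S ω))) (u, (v, s))).toReal *
            Real.log ((pm μ (fun ω => (V ω, S ω)) (v, s)).toReal /
              (pm μ (fun ω => (U ω, (V ω, S ω))) (u, (v, s))).toReal))
        = ∑' s : C, pm μ S s * ENNReal.ofReal ((pm μ (fun ω => (U ω, V ω)) (u, v)).toReal *
            Real.log ((pm μ V v).toReal / (pm μ (fun ω => (U ω, V ω)) (u, v)).toReal)) := by
          congr 1; funext s; exact hterm u v s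
      _ = _ := by
          rw [ENNReal.tsum_mul_right, pm_total hS, one_mul]
  rw [ENNReal.tsum_prod']
  congr 1; funext u
  exact key u

lemma toReal_entNN [IsProbabilityMeasure μ] (X : Ω → A) :
    (entNN μ X).toReal = ∑' a, Real.negMulLog (pm μ X a).toReal := by
  rw [entNN, ENNReal.tsum_toReal_eq (fun a => ENNReal.ofReal_ne_top)]
  congr 1; funext a
  exact ENNReal.toReal_ofReal (negMulLog_nonneg ENNReal.toReal_nonneg (pm_le_one X a))

lemma entNN_ne_top_of_summable [IsProbabilityMeasure μ] {X : Ω → A}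
    (h : Summable fun a => Real.negMulLog (pm μ X a).toReal) : entNN μ X ≠ ⊤ := by
  rw [entNN, ← ENNReal.ofReal_tsum_of_nonneg
    (fun a => negMulLog_nonneg ENNReal.toReal_nonneg (pm_le_one X a)) h]
  exact ENNReal.ofReal_ne_top

end CEMaux

open CEMaux

/-- If `X₀, Z₁, Z₂, …` are independent random variables with values in a countable
abelian group, the `Zₙ` (n ≥ 1) identically distributed, all with finite entropy, and
`Xₙ = X₀ + Z₁ + ⋯ + Zₙ`, then the conditional entropy
`H(Z₁ | Xₙ) = H(Z₁, Xₙ) - H(Xₙ)` is non-decreasing in `n` (for `n ≥ 1`). -/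
theorem condEntropy_mono {Ω Γ : Type*} [MeasurableSpace Ω] [MeasurableSpace Γ]
    [MeasurableSingletonClass Γ] [Countable Γ] [AddCommGroup Γ]
    (μ : Measure Ω) [IsProbabilityMeasure μ]
    (X0 : Ω → Γ) (Z : ℕ → Ω → Γ)
    (hX0 : Measurable X0) (hZ : ∀ n, Measurable (Z n))
    (hindep : iIndepFun
      (fun n => if n = 0 then X0 else Z n) μ)
    (hid : ∀ i j : ℕ, 1 ≤ i → 1 ≤ j → μ.map (Z i) = μ.map (Z j))
    (hfin0 : Summable fun g : Γ => Real.negMulLog (μ (X0 ⁻¹' {g})).toReal)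
    (hfinZ : Summable fun g : Γ => Real.negMulLog (μ (Z 1 ⁻¹' {g})).toReal)
    (X : ℕ → Ω → Γ)
    (hX : ∀ n ω, X n ω = X0 ω + ∑ i ∈ Finset.Icc 1 n, Z i ω) :
    ∀ m n : ℕ, 1 ≤ m → m ≤ n →
      rvEntropy μ (fun ω => (Z 1 ω, X m ω)) - rvEntropy μ (X m) ≤
      rvEntropy μ (fun ω => (Z 1 ω, X n ω)) - rvEntropy μ (X n) := by
  intro m n hm hmn
  -- basic structure of the X's
  have hX0eq : X 0 = X0 := funext fun ω => by
    rw [hX 0, Finset.Icc_eq_empty (by omega), Finset.sum_empty, add_zero]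
  have hXsucc : ∀ k, X (k+1) = (fun p : Γ × Γ => p.1 + p.2) ∘ (fun ω => (X k ω, Z (k+1) ω)) := by
    intro k; funext ω
    show X (k+1) ω = X k ω + Z (k+1) ω
    rw [hX (k+1), hX k, Finset.sum_Icc_succ_top (by omega), add_assoc]
  have hXmeas : ∀ k, Measurable (X k) := by
    intro k
    induction k with
    | zero => rw [hX0eq]; exact hX0
    | succ k ih =>
        rw [hXsucc k]
        exact (measurable_of_countable _).comp (ih.prodMk (hZ (k+1)))
  -- identical distributions
  have hpmZ : ∀ i, 1 ≤ i → pm μ (Z i) = pm μ (Z 1) := by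
    intro i hi; funext g
    rw [pm, pm, ← Measure.map_apply (hZ i) (measurableSet_singleton g),
      ← Measure.map_apply (hZ 1) (measurableSet_singleton g), hid i 1 hi le_rfl]
  have hfinZ' : ∀ i, 1 ≤ i → entNN μ (Z i) ≠ ⊤ := by
    intro i hi
    rw [entNN, hpmZ i hi]
    exact entNN_ne_top_of_summable hfinZ
  -- finiteness of H(X k)
  have hfinX : ∀ k, entNN μ (X k) ≠ ⊤ := by
    intro k
    induction k with
    | zero => rw [hX0eq]; exact entNN_ne_top_of_summable hfin0
    | succ k ih =>
        have h1 : entNN μ (X (k+1)) ≤ entNN μ (X k) + entNN μ (Z (k+1)) := by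
          rw [hXsucc k]
          exact le_trans
            (entNN_comp_le ((hXmeas k).prodMk (hZ (k+1))) (fun p : Γ × Γ => p.1 + p.2))
            (entNN_pair_le (hXmeas k) (hZ (k+1)))
        have h2 : entNN μ (X k) + entNN μ (Z (k+1)) ≠ ⊤ :=
          ENNReal.add_ne_top.mpr ⟨ih, hfinZ' (k+1) (by omega)⟩
        exact (lt_of_le_of_lt h1 (lt_top_iff_ne_top.mpr h2)).ne
  -- the increment S
  set S : Ω → Γ := fun ω => ∑ i ∈ Finset.Ioc m n, Z i ω with hSdef
  have hIccIoc : ∀ k : ℕ, Finset.Icc 1 k = Finset.Ioc 0 k := by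
    intro k; ext x; simp only [Finset.mem_Icc, Finset.mem_Ioc]; omega
  have hXnm : ∀ ω, X n ω = X m ω + S ω := by
    intro ω
    rw [hX n, hX m, hIccIoc, hIccIoc,
      ← Finset.sum_Ioc_consecutive (fun i => Z i ω) (Nat.zero_le m) hmn, add_assoc]
  have hSmeas : Measurable S := by
    have hrepr : S = (fun p : Γ × Γ => p.2 - p.1) ∘ (fun ω => (X m ω, X n ω)) := by
      funext ω
      show S ω = X n ω - X m ω
      rw [hXnm ω]
      exact (add_sub_cancel_left (X m ω) (S ω)).symm
    rw [hrepr]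
    exact (measurable_of_countable _).comp ((hXmeas m).prodMk (hXmeas n))
  -- independence of (Z 1, X m) and S
  have hFmeas : ∀ i : ℕ, Measurable ((fun k => if k = 0 then X0 else Z k) i) := by
    intro i
    dsimp only
    split_ifs
    · exact hX0
    · exact hZ i
  have h1T1 : (1:ℕ) ∈ Finset.range (m+1) := Finset.mem_range.mpr (by omega)
  have h0T1 : (0:ℕ) ∈ Finset.range (m+1) := Finset.mem_range.mpr (by omega)
  have hiT1 : ∀ i : ℕ, i ∈ Finset.Icc 1 m → i ∈ Finset.range (m+1) := fun i hi =>
    Finset.mem_range.mpr (by rw [Finset.mem_Icc] at hi; omega)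
  have hdisj : Disjoint (Finset.range (m+1)) (Finset.Ioc m n) := by
    rw [Finset.disjoint_left]
    intro x hx hx2
    rw [Finset.mem_range] at hx
    rw [Finset.mem_Ioc] at hx2
    omega
  have comp := (hindep.indepFun_finset (Finset.range (m+1)) (Finset.Ioc m n) hdisj hFmeas).comp
    (measurable_of_countable (fun v : { x // x ∈ Finset.range (m+1) } → Γ =>
      (v ⟨1, h1T1⟩, v ⟨0, h0T1⟩ + ∑ i ∈ (Finset.Icc 1 m).attach, v ⟨i.1, hiT1 i.1 i.2⟩)))
    (measurable_of_countable (fun v : { x // x ∈ Finset.Ioc m n } → Γ =>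
      ∑ i ∈ (Finset.Ioc m n).attach, v i))
  have hgeq : ((fun v : { x // x ∈ Finset.range (m+1) } → Γ =>
      (v ⟨1, h1T1⟩, v ⟨0, h0T1⟩ + ∑ i ∈ (Finset.Icc 1 m).attach, v ⟨i.1, hiT1 i.1 i.2⟩))
        ∘ (fun a (i : (Finset.range (m+1) : Finset ℕ)) =>
            (fun k => if k = 0 then X0 else Z k) ↑i a))
      = fun ω => (Z 1 ω, X m ω) := by
    funext ω
    simp only [Function.comp_apply]
    have c1 : (if (1:ℕ) = 0 then X0 else Z 1) ω = Z 1 ω := by norm_num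
    have c2 : (if (0:ℕ) = 0 then X0 else Z 0) ω
        + ∑ i ∈ (Finset.Icc 1 m).attach, (if (i.1:ℕ) = 0 then X0 else Z i.1) ω = X m ω := by
      rw [if_pos rfl, Finset.sum_attach (Finset.Icc 1 m) (fun i => (if i = 0 then X0 else Z i) ω),
        hX m]
      congr 1
      apply Finset.sum_congr rfl
      intro i hi
      rw [Finset.mem_Icc] at hi
      rw [if_neg (by omega)]
    exact Prod.ext c1 c2
  have hheq : ((fun v : { x // x ∈ Finset.Ioc m n } → Γ => ∑ i ∈ (Finset.Ioc m n).attach, v i)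
        ∘ (fun a (i : (Finset.Ioc m n : Finset ℕ)) =>
            (fun k => if k = 0 then X0 else Z k) ↑i a))
      = S := by
    funext ω
    simp only [Function.comp_apply]
    rw [Finset.sum_attach (Finset.Ioc m n) (fun i => (if i = 0 then X0 else Z i) ω)]
    show _ = S ω
    rw [hSdef]
    apply Finset.sum_congr rfl
    intro i hi
    rw [Finset.mem_Ioc] at hi
    rw [if_neg (by omega)]
  rw [hgeq, hheq] at comp
  -- the key inequality on conditional entropies
  have step := cEnt_comp_le (μ := μ) (hZ 1) ((hXmeas m).prodMk hSmeas) (fun p : Γ × Γ => p.1 + p.2)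
  have hrw : cEnt μ (Z 1) (fun ω => (fun p : Γ × Γ => p.1 + p.2) ((X m ω, S ω)))
      = cEnt μ (Z 1) (X n) := by
    congr 1
    funext ω
    exact (hXnm ω).symm
  have key : cEnt μ (Z 1) (X m) ≤ cEnt μ (Z 1) (X n) :=
    ((cEnt_of_indep (hZ 1) (hXmeas m) hSmeas comp).symm).trans_le (step.trans_eq hrw)
  -- chain rule and assembly
  have e1 := entNN_pair (μ := μ) (hZ 1) (hXmeas m)
  have e2 := entNN_pair (μ := μ) (hZ 1) (hXmeas n)
  have main : entNN μ (fun ω => (Z 1 ω, X m ω)) + entNN μ (X n)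
      ≤ entNN μ (fun ω => (Z 1 ω, X n ω)) + entNN μ (X m) := by
    rw [e1, e2]
    calc cEnt μ (Z 1) (X m) + entNN μ (X m) + entNN μ (X n)
        = cEnt μ (Z 1) (X m) + (entNN μ (X m) + entNN μ (X n)) := add_assoc _ _ _
      _ ≤ cEnt μ (Z 1) (X n) + (entNN μ (X m) + entNN μ (X n)) := add_le_add_left key _
      _ = cEnt μ (Z 1) (X n) + entNN μ (X n) + entNN μ (X m) := by
          rw [add_comm (entNN μ (X m)) (entNN μ (X n)), ← add_assoc]
  have fm : entNN μ (X m) ≠ ⊤ := hfinX m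
  have fn : entNN μ (X n) ≠ ⊤ := hfinX n
  have fW : entNN μ (Z 1) ≠ ⊤ := hfinZ' 1 le_rfl
  have fWm : entNN μ (fun ω => (Z 1 ω, X m ω)) ≠ ⊤ :=
    (lt_of_le_of_lt (entNN_pair_le (hZ 1) (hXmeas m))
      (lt_top_iff_ne_top.mpr (ENNReal.add_ne_top.mpr ⟨fW, fm⟩))).ne
  have fWn : entNN μ (fun ω => (Z 1 ω, X n ω)) ≠ ⊤ :=
    (lt_of_le_of_lt (entNN_pair_le (hZ 1) (hXmeas n))
      (lt_top_iff_ne_top.mpr (ENNReal.add_ne_top.mpr ⟨fW, fn⟩))).ne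
  have htr := ENNReal.toReal_mono (ENNReal.add_ne_top.mpr ⟨fWn, fm⟩) main
  rw [ENNReal.toReal_add fWm fn, ENNReal.toReal_add fWn fm] at htr
  have r1 : rvEntropy μ (fun ω => (Z 1 ω, X m ω))
      = (entNN μ (fun ω => (Z 1 ω, X m ω))).toReal := (toReal_entNN _).symm
  have r2 : rvEntropy μ (fun ω => (Z 1 ω, X n ω))
      = (entNN μ (fun ω => (Z 1 ω, X n ω))).toReal := (toReal_entNN _).symm
  have r3 : rvEntropy μ (X m) = (entNN μ (X m)).toReal := (toReal_entNN _).symm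
  have r4 : rvEntropy μ (X n) = (entNN μ (X n)).toReal := (toReal_entNN _).symm
  rw [r1, r2, r3, r4]
  linarith
end

section
/- For any probability measure μ on ℝ, any x₀ ∈ ℝ, and any m ∈ ℕ, the translated measure ν(A) = μ(A + x₀) satisfies |H(μ, 𝒟_m) - H(ν, 𝒟_m)| ≤ C for a universal constant C (independent of μ, x₀, m). -/
open MeasureTheory ENNReal

/-- Entropy of a measure on `ℝ` with respect to the dyadic partition
`𝒟_m = {[k 2^{-m}, (k+1) 2^{-m})}`. -/
noncomputable def dyadEntropy (μ : Measure ℝ) (m : ℕ) : ℝ≥0∞ :=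
  ∑' k : ℤ, ENNReal.ofReal (Real.negMulLog
    (μ (Set.Ico ((k : ℝ) * 2 ^ (-(m : ℤ))) (((k : ℝ) + 1) * 2 ^ (-(m : ℤ))))).toReal)

private lemma nml_add_le {a b : ℝ} (ha : 0 ≤ a) (hb : 0 ≤ b) :
    Real.negMulLog (a + b) ≤ Real.negMulLog a + Real.negMulLog b := by
  rcases ha.eq_or_lt with h | ha'
  · simp [← h]
  rcases hb.eq_or_lt with h | hb'
  · simp [← h]
  have hs : 0 < a + b := by linarith
  simp only [Real.negMulLog]
  have h1 : Real.log a ≤ Real.log (a + b) := Real.log_le_log ha' (by linarith)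
  have h2 : Real.log b ≤ Real.log (a + b) := Real.log_le_log hb' (by linarith)
  nlinarith [mul_le_mul_of_nonneg_left h1 ha, mul_le_mul_of_nonneg_left h2 hb]

private lemma nml_le_add {a b : ℝ} (ha : 0 ≤ a) (hb : 0 ≤ b) :
    Real.negMulLog a + Real.negMulLog b ≤
      Real.negMulLog (a + b) + (a + b) * Real.log 2 := by
  have hlog2 : 0 ≤ Real.log 2 := Real.log_nonneg one_le_two
  rcases ha.eq_or_lt with h | ha'
  · simp only [← h, Real.negMulLog_zero, zero_add]
    nlinarith
  rcases hb.eq_or_lt with h | hb'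
  · simp only [← h, Real.negMulLog_zero, add_zero]
    nlinarith
  have hs : 0 < a + b := by linarith
  have key : ∀ x : ℝ, 0 < x → Real.log x ≤ Real.log 2 + (x - 2) / 2 := by
    intro x hx
    have h1 := Real.log_le_sub_one_of_pos (show 0 < x / 2 by linarith)
    have hl : Real.log (x / 2) = Real.log x - Real.log 2 :=
      Real.log_div (ne_of_gt hx) two_ne_zero
    linarith
  have k1 := key ((a + b) / a) (by positivity)
  have k2 := key ((a + b) / b) (by positivity)
  have l1 : Real.log ((a + b) / a) = Real.log (a + b) - Real.log a :=
    Real.log_div (ne_of_gt hs) (ne_of_gt ha')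
  have l2 : Real.log ((a + b) / b) = Real.log (a + b) - Real.log b :=
    Real.log_div (ne_of_gt hs) (ne_of_gt hb')
  rw [l1] at k1
  rw [l2] at k2
  have m1 := mul_le_mul_of_nonneg_left k1 ha
  have m2 := mul_le_mul_of_nonneg_left k2 hb
  have e1 : a * ((a + b) / a - 2) = (a + b) - 2 * a := by field_simp
  have e2 : b * ((a + b) / b - 2) = (a + b) - 2 * b := by field_simp
  have m1' : a * Real.log (a + b) - a * Real.log a ≤
      a * Real.log 2 + ((a + b) - 2 * a) / 2 := by
    calc a * Real.log (a + b) - a * Real.log a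
        = a * (Real.log (a + b) - Real.log a) := by ring
      _ ≤ a * (Real.log 2 + ((a + b) / a - 2) / 2) := m1
      _ = a * Real.log 2 + (a * ((a + b) / a - 2)) / 2 := by ring
      _ = a * Real.log 2 + ((a + b) - 2 * a) / 2 := by rw [e1]
  have m2' : b * Real.log (a + b) - b * Real.log b ≤
      b * Real.log 2 + ((a + b) - 2 * b) / 2 := by
    calc b * Real.log (a + b) - b * Real.log b
        = b * (Real.log (a + b) - Real.log b) := by ring
      _ ≤ b * (Real.log 2 + ((a + b) / b - 2) / 2) := m2
      _ = b * Real.log 2 + (b * ((a + b) / b - 2)) / 2 := by ring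
      _ = b * Real.log 2 + ((a + b) - 2 * b) / 2 := by rw [e2]
  simp only [Real.negMulLog]
  nlinarith [m1', m2']

/-- The entropy summand as a function `ℝ≥0∞ → ℝ≥0∞`. -/
private noncomputable def Fent (x : ℝ≥0∞) : ℝ≥0∞ :=
  ENNReal.ofReal (Real.negMulLog x.toReal)

private lemma Fent_add_le {x y : ℝ≥0∞} (hx : x ≠ ∞) (hy : y ≠ ∞) :
    Fent (x + y) ≤ Fent x + Fent y := by
  unfold Fent
  rw [ENNReal.toReal_add hx hy]
  exact le_trans
    (ENNReal.ofReal_le_ofReal (nml_add_le ENNReal.toReal_nonneg ENNReal.toReal_nonneg))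
    ENNReal.ofReal_add_le

private lemma add_Fent_le {x y : ℝ≥0∞} (hx : x ≤ 1) (hy : y ≤ 1) :
    Fent x + Fent y ≤ Fent (x + y) + ENNReal.ofReal ((x + y).toReal * Real.log 2) := by
  have hx' : x ≠ ∞ := ne_top_of_le_ne_top ENNReal.one_ne_top hx
  have hy' : y ≠ ∞ := ne_top_of_le_ne_top ENNReal.one_ne_top hy
  have hx1 : x.toReal ≤ 1 := by
    simpa using ENNReal.toReal_mono ENNReal.one_ne_top hx
  have hy1 : y.toReal ≤ 1 := by
    simpa using ENNReal.toReal_mono ENNReal.one_ne_top hy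
  unfold Fent
  rw [← ENNReal.ofReal_add (Real.negMulLog_nonneg ENNReal.toReal_nonneg hx1)
      (Real.negMulLog_nonneg ENNReal.toReal_nonneg hy1)]
  refine le_trans (ENNReal.ofReal_le_ofReal ?_) ENNReal.ofReal_add_le
  rw [ENNReal.toReal_add hx' hy']
  exact nml_le_add ENNReal.toReal_nonneg ENNReal.toReal_nonneg

private lemma key_le (μ : Measure ℝ) [IsProbabilityMeasure μ] (x₀ : ℝ) (m : ℕ) :
    dyadEntropy (μ.map fun x => x - x₀) m ≤ dyadEntropy μ m + ENNReal.ofReal (Real.log 2) := by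
  have hfin : ∀ s : Set ℝ, μ s ≠ ∞ := fun s => (measure_lt_top μ s).ne
  have hle1 : ∀ s : Set ℝ, μ s ≤ 1 := fun s => prob_le_one
  set w : ℝ := 2 ^ (-(m : ℤ)) with hw
  have hw0 : 0 < w := by positivity
  set n : ℤ := ⌊x₀ / w⌋ with hn
  set t : ℝ := x₀ / w - n with ht
  have ht0 : 0 ≤ t := by
    have := Int.floor_le (x₀ / w)
    simp only [ht]
    linarith
  have ht1 : t ≤ 1 := by
    have := Int.lt_floor_add_one (x₀ / w)
    simp only [ht]
    linarith
  have hx₀ : x₀ = ((n : ℝ) + t) * w := by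
    have : (n : ℝ) + t = x₀ / w := by simp [ht]
    rw [this]
    field_simp
  set A : ℤ → ℝ≥0∞ := fun j => μ (Set.Ico (((j : ℝ) + t) * w) (((j : ℝ) + 1) * w)) with hA
  set B : ℤ → ℝ≥0∞ := fun j => μ (Set.Ico ((j : ℝ) * w) (((j : ℝ) + t) * w)) with hB
  have hsplit : ∀ a c b : ℝ, a ≤ c → c ≤ b →
      μ (Set.Ico a b) = μ (Set.Ico a c) + μ (Set.Ico c b) := by
    intro a c b h1 h2
    rw [← Set.Ico_union_Ico_eq_Ico h1 h2,
      measure_union (by rw [Set.Ico_disjoint_Ico]; simp) measurableSet_Ico]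
  have hmeas : Measurable fun x : ℝ => x - x₀ := measurable_id.sub measurable_const
  have hD : ∀ j : ℤ, μ (Set.Ico ((j : ℝ) * w) (((j : ℝ) + 1) * w)) = B j + A j := by
    intro j
    exact hsplit _ (((j : ℝ) + t) * w) _
      (by nlinarith) (by nlinarith)
  have hν : ∀ k : ℤ, (μ.map fun x => x - x₀) (Set.Ico ((k : ℝ) * w) (((k : ℝ) + 1) * w))
      = A (k + n) + B (k + n + 1) := by
    intro k
    rw [Measure.map_apply hmeas measurableSet_Ico, Set.preimage_sub_const_Ico]
    have e1 : (k : ℝ) * w + x₀ = (((k + n : ℤ) : ℝ) + t) * w := by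
      rw [hx₀]; push_cast; ring
    have e2 : ((k : ℝ) + 1) * w + x₀ = (((k + n + 1 : ℤ) : ℝ) + t) * w := by
      rw [hx₀]; push_cast; ring
    rw [e1, e2, hsplit _ ((((k + n : ℤ) : ℝ) + 1) * w) _ (by push_cast; nlinarith)
      (by push_cast; nlinarith)]
    congr 1
    simp only [hB]
    congr 2 <;> push_cast <;> ring
  have hdisj : Pairwise (Function.onFun Disjoint
      fun j : ℤ => Set.Ico ((j : ℝ) * w) (((j : ℝ) + 1) * w)) := by
    intro i j hij
    have key : ∀ i j : ℤ, i < j → Disjoint (Set.Ico ((i : ℝ) * w) (((i : ℝ) + 1) * w))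
        (Set.Ico ((j : ℝ) * w) (((j : ℝ) + 1) * w)) := by
      intro i j h
      rw [Set.Ico_disjoint_Ico]
      have hij' : (i : ℝ) + 1 ≤ (j : ℝ) := by exact_mod_cast h
      refine le_trans (min_le_left _ _) (le_trans ?_ (le_max_right _ _))
      nlinarith
    rcases lt_or_gt_of_ne hij with h | h
    · exact key i j h
    · exact (key j i h).symm
  have hsum1 : (∑' j : ℤ, μ (Set.Ico ((j : ℝ) * w) (((j : ℝ) + 1) * w))) ≤ 1 := by
    rw [← measure_iUnion hdisj fun j => measurableSet_Ico]
    exact prob_le_one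
  have hEμ : dyadEntropy μ m
      = ∑' j : ℤ, Fent (μ (Set.Ico ((j : ℝ) * w) (((j : ℝ) + 1) * w))) := rfl
  have hEν : dyadEntropy (μ.map fun x => x - x₀) m
      = ∑' k : ℤ, Fent (A (k + n) + B (k + n + 1)) := by
    unfold dyadEntropy
    refine tsum_congr fun k => ?_
    simp only [← hw]
    rw [hν k]
    rfl
  calc dyadEntropy (μ.map fun x => x - x₀) m
      = ∑' k : ℤ, Fent (A (k + n) + B (k + n + 1)) := hEν
    _ ≤ ∑' k : ℤ, (Fent (A (k + n)) + Fent (B (k + n + 1))) :=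
        ENNReal.tsum_le_tsum fun k => Fent_add_le (hfin _) (hfin _)
    _ = (∑' k : ℤ, Fent (A (k + n))) + ∑' k : ℤ, Fent (B (k + n + 1)) := ENNReal.tsum_add
    _ = (∑' j : ℤ, Fent (A j)) + ∑' j : ℤ, Fent (B j) := by
        rw [show (∑' k : ℤ, Fent (A (k + n))) = ∑' j : ℤ, Fent (A j) from
          (Equiv.addRight n).tsum_eq fun j => Fent (A j)]
        congr 1
        rw [← (Equiv.addRight (n + 1)).tsum_eq fun j => Fent (B j)]
        exact tsum_congr fun k => congrArg (fun z => Fent (B z)) (add_assoc k n 1)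
    _ = ∑' j : ℤ, (Fent (A j) + Fent (B j)) := ENNReal.tsum_add.symm
    _ ≤ ∑' j : ℤ, (Fent (μ (Set.Ico ((j : ℝ) * w) (((j : ℝ) + 1) * w)))
          + ENNReal.ofReal ((μ (Set.Ico ((j : ℝ) * w) (((j : ℝ) + 1) * w))).toReal
            * Real.log 2)) := by
        refine ENNReal.tsum_le_tsum fun j => ?_
        rw [hD j, add_comm (B j) (A j)]
        exact add_Fent_le (hle1 _) (hle1 _)
    _ = (∑' j : ℤ, Fent (μ (Set.Ico ((j : ℝ) * w) (((j : ℝ) + 1) * w))))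
          + ∑' j : ℤ, ENNReal.ofReal ((μ (Set.Ico ((j : ℝ) * w) (((j : ℝ) + 1) * w))).toReal
            * Real.log 2) := ENNReal.tsum_add
    _ ≤ dyadEntropy μ m + ENNReal.ofReal (Real.log 2) := by
        rw [hEμ]
        refine add_le_add le_rfl ?_
        calc (∑' j : ℤ, ENNReal.ofReal
              ((μ (Set.Ico ((j : ℝ) * w) (((j : ℝ) + 1) * w))).toReal * Real.log 2))
            = ∑' j : ℤ, μ (Set.Ico ((j : ℝ) * w) (((j : ℝ) + 1) * w))
                * ENNReal.ofReal (Real.log 2) := by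
              refine tsum_congr fun j => ?_
              rw [ENNReal.ofReal_mul ENNReal.toReal_nonneg, ENNReal.ofReal_toReal (hfin _)]
          _ = (∑' j : ℤ, μ (Set.Ico ((j : ℝ) * w) (((j : ℝ) + 1) * w)))
                * ENNReal.ofReal (Real.log 2) := ENNReal.tsum_mul_right
          _ ≤ 1 * ENNReal.ofReal (Real.log 2) := mul_le_mul' hsum1 le_rfl
          _ = ENNReal.ofReal (Real.log 2) := one_mul _

/-- Translation changes dyadic entropy by at most a universal constant: if
`ν(A) = μ(A + x₀)`, i.e. `ν = (x ↦ x - x₀)_* μ`, then `|H(μ,𝒟_m) - H(ν,𝒟_m)| ≤ C`. -/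
theorem dyadEntropy_translate :
    ∃ C : ℝ, 0 < C ∧ ∀ (μ : Measure ℝ), IsProbabilityMeasure μ → ∀ (x₀ : ℝ) (m : ℕ),
      dyadEntropy (μ.map fun x => x - x₀) m ≤ dyadEntropy μ m + ENNReal.ofReal C ∧
      dyadEntropy μ m ≤ dyadEntropy (μ.map fun x => x - x₀) m + ENNReal.ofReal C := by
  refine ⟨Real.log 2, Real.log_pos one_lt_two, fun μ hμ x₀ m => ?_⟩
  have hmeas : ∀ a : ℝ, Measurable fun x : ℝ => x - a :=
    fun a => measurable_id.sub measurable_const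
  refine ⟨key_le μ x₀ m, ?_⟩
  haveI : IsProbabilityMeasure (μ.map fun x => x - x₀) :=
    Measure.isProbabilityMeasure_map (hmeas x₀).aemeasurable
  have hmap : ((μ.map fun x => x - x₀).map fun x => x - (-x₀)) = μ := by
    rw [Measure.map_map (hmeas (-x₀)) (hmeas x₀)]
    have : ((fun x : ℝ => x - (-x₀)) ∘ fun x : ℝ => x - x₀) = id := by
      funext x; simp
    rw [this, Measure.map_id]
  have := key_le (μ.map fun x => x - x₀) (-x₀) m
  rwa [hmap] at this
end

section
/- Let k ∈ ℕ and let F be a k-times continuously differentiable function on a compact interval J ⊆ ℝ with ‖F‖_{J,k} := max_{0≤p≤k} max_{x∈J} |F^{(p)}(x)| ≤ M. Suppose 0 < c < 1 is such that for every x ∈ J there is p ∈ {0,…,k} with |F^{(p)}(x)| > c. Then for every 0 < ρ < c/2^k, the set F^{-1}((-ρ,ρ)) ∩ J can be covered by at most C/c² intervals, each of length at most 2(ρ/c)^{1/2^k}, where C depends only on k, M, and the length of J. -/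
open Set

lemma comb_cover (d D : ℝ) (hD : 0 < D) (hd : 0 ≤ d) :
    ∀ n : ℕ, ∀ (t' : Finset (Set ℝ)) (A : Set ℝ) (x₀ b : ℝ),
      A ⊆ Icc x₀ b →
      (∀ s ∈ t', ∃ u v : ℝ, s = Icc u v) →
      (∀ x ∈ A, ∀ s ∈ t', x ∉ s) →
      (∀ x y : ℝ, x ∈ A → y ∈ A → x ≤ y → y - x ≤ D →
        (∀ s ∈ t', ∀ z ∈ s, z ∉ Icc x y) → y - x ≤ d) →
      (t'.card : ℝ) + (b - x₀) / D ≤ n →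
      ∃ t : Finset (Set ℝ), t.card ≤ n + 1 ∧
        (∀ s ∈ t, ∃ u : ℝ, s = Icc u (u + d)) ∧ A ⊆ ⋃ s ∈ t, s := by
  intro n
  induction n with
  | zero =>
    intro t' A x₀ b hsub hshape hdisj hpair hmeas
    rcases A.eq_empty_or_nonempty with hA | hA
    · exact ⟨∅, by simp, by simp, by simp [hA]⟩
    · obtain ⟨x, hx⟩ := hA
      have h1 := hsub hx
      have hb : x₀ ≤ b := le_trans h1.1 h1.2
      have hbx : b ≤ x₀ := by
        by_contra hcon
        push_neg at hcon
        have h0 : (0:ℝ) ≤ (t'.card : ℝ) := by positivity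
        have := div_pos (sub_pos.2 hcon) hD
        push_cast at hmeas
        linarith
      refine ⟨{Icc x₀ (x₀ + d)}, by simp, ?_, ?_⟩
      · intro s hs
        rw [Finset.mem_singleton] at hs
        exact ⟨x₀, hs⟩
      · intro y hy
        have h2 := hsub hy
        simp only [Finset.mem_singleton, mem_iUnion]
        refine ⟨Icc x₀ (x₀+d), rfl, h2.1, ?_⟩
        have hyx : y ≤ x₀ := le_trans h2.2 hbx
        linarith
  | succ n IH =>
    intro t' A x₀ b hsub hshape hdisj hpair hmeas
    classical
    rcases A.eq_empty_or_nonempty with hA | hA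
    · exact ⟨∅, by simp, by simp, by simp [hA]⟩
    set x := sInf A with hxdef
    have hbdd : BddBelow A := ⟨x₀, fun y hy => (hsub hy).1⟩
    have hxmemIcc : x₀ ≤ x := le_csInf hA (fun y hy => (hsub hy).1)
    obtain ⟨y₀, hy₀⟩ := hA
    have hxb : x ≤ b := le_trans (csInf_le hbdd hy₀) (hsub hy₀).2
    have hxle : ∀ y ∈ A, x ≤ y := fun y hy => csInf_le hbdd hy
    -- approximation of the infimum
    have happrox : ∀ ε : ℝ, 0 < ε → ∃ x'' ∈ A, x'' < x + ε := by
      intro ε hε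
      exact exists_lt_of_csInf_lt ⟨y₀, hy₀⟩ (by linarith)
    by_cases hmeet : ∃ s ∈ t', ∃ z ∈ s, z ∈ Icc x (x + D)
    · -- some interval of t' meets [x, x+D]; pick one with least right endpoint
      classical
      set T := t'.filter (fun s => ∃ z ∈ s, z ∈ Icc x (x + D)) with hT
      have hTne : T.Nonempty := by
        obtain ⟨s, hs, hz⟩ := hmeet
        exact ⟨s, Finset.mem_filter.2 ⟨hs, hz⟩⟩
      obtain ⟨s₀, hs₀T, hs₀min⟩ := T.exists_min_image (fun s => sSup s) hTne
      have hs₀t' : s₀ ∈ t' := (Finset.mem_filter.1 hs₀T).1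
      obtain ⟨z₀, hz₀s, hz₀m⟩ := (Finset.mem_filter.1 hs₀T).2
      obtain ⟨u₀, v₀, hs₀⟩ := hshape s₀ hs₀t'
      have huv₀ : u₀ ≤ v₀ := by
        rw [hs₀] at hz₀s; exact le_trans hz₀s.1 hz₀s.2
      have hsup₀ : sSup s₀ = v₀ := by rw [hs₀]; exact csSup_Icc huv₀
      have hv₀x : x ≤ v₀ := by
        rw [hs₀] at hz₀s; exact le_trans hz₀m.1 hz₀s.2
      -- right endpoints of all meeting intervals are ≥ v₀
      have hvmin : ∀ s ∈ t', ∀ u v : ℝ, s = Icc u v → (∃ z ∈ s, z ∈ Icc x (x+D)) → v₀ ≤ v := by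
        intro s hs u v hsuv hz
        have hsT : s ∈ T := Finset.mem_filter.2 ⟨hs, hz⟩
        have := hs₀min s hsT
        rw [hsup₀] at this
        obtain ⟨z, hzs, _⟩ := hz
        rw [hsuv] at hzs
        rw [hsuv, csSup_Icc (le_trans hzs.1 hzs.2)] at this
        exact this
      set m := min (x + D) v₀ with hm
      -- cluster claim
      have hclust : ∀ y ∈ A, y < m → y ≤ x + d := by
        intro y hy hym
        by_contra hcon
        push_neg at hcon
        obtain ⟨x'', hx''A, hx''lt⟩ := happrox (y - (x + d)) (by linarith)
        rcases le_or_gt x'' y with hxy | hxy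
        · have : y - x'' ≤ d := by
            apply hpair x'' y hx''A hy hxy
            · have := hxle x'' hx''A
              have hym' : y ≤ x + D := le_trans hym.le (min_le_left _ _)
              linarith
            · intro s hs z hzs hzxy
              obtain ⟨u, v, hsuv⟩ := hshape s hs
              have hzm : z ∈ Icc x (x+D) := by
                constructor
                · exact le_trans (hxle x'' hx''A) hzxy.1
                · exact le_trans hzxy.2 (le_trans hym.le (min_le_left _ _))
              have hvv₀ : v₀ ≤ v := hvmin s hs u v hsuv ⟨z, hzs, hzm⟩
              -- then y ∈ s, contradiction with disjointness
              have hyv : y ≤ v := by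
                have : m ≤ v := le_trans (min_le_right _ _) hvv₀
                linarith
              have hyu : u ≤ y := by
                rw [hsuv] at hzs; exact le_trans hzs.1 hzxy.2
              exact hdisj y hy s hs (by rw [hsuv]; exact ⟨hyu, hyv⟩)
          linarith
        · have := hxle y hy
          linarith
      rcases le_or_gt (x + D) v₀ with hcase | hcase
      · -- m = x + D; m ∈ s₀ so m ∉ A
        have hmxD : m = x + D := min_eq_left hcase
        have hmins₀ : m ∈ s₀ := by
          rw [hs₀]
          constructor
          · rw [hmxD]; rw [hs₀] at hz₀s; exact le_trans hz₀s.1 hz₀m.2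
          · rw [hmxD]; exact hcase
        obtain ⟨t₂, ht₂card, ht₂shape, ht₂cov⟩ :=
          IH t' (A ∩ Ioi m) m b
            (fun y hy => ⟨hy.2.le, (hsub hy.1).2⟩)
            hshape
            (fun y hy => hdisj y hy.1)
            (fun x1 y1 h1 h2 h3 h4 h5 => hpair x1 y1 h1.1 h2.1 h3 h4 h5)
            (by
              rw [hmxD]
              have : (b - (x + D))/D ≤ (b - x₀)/D - 1 := by
                rw [div_sub_one hD.ne', div_le_div_iff_of_pos_right hD]
                linarith
              push_cast at hmeas ⊢
              linarith)
        refine ⟨insert (Icc x (x + d)) t₂, ?_, ?_, ?_⟩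
        · calc (insert (Icc x (x+d)) t₂).card ≤ t₂.card + 1 := Finset.card_insert_le _ _
            _ ≤ n + 1 + 1 := by omega
        · intro s hs
          rcases Finset.mem_insert.1 hs with h | h
          · exact ⟨x, h⟩
          · exact ht₂shape s h
        · intro y hy
          simp only [mem_iUnion, Finset.mem_insert]
          rcases lt_or_ge y m with hym | hym
          · exact ⟨_, Or.inl rfl, hxle y hy, hclust y hy hym⟩
          · have hyne : y ≠ m := fun h => hdisj y hy s₀ hs₀t' (by rw [h]; exact hmins₀)
            have : y ∈ A ∩ Ioi m := ⟨hy, lt_of_le_of_ne hym (Ne.symm hyne)⟩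
            obtain ⟨s, hs, hys⟩ := mem_iUnion₂.1 (ht₂cov this)
            exact ⟨s, Or.inr hs, hys⟩
      · -- m = v₀ < x + D; erase s₀
        have hmv₀ : m = v₀ := min_eq_right hcase.le
        have hv₀mem : v₀ ∈ s₀ := by rw [hs₀]; exact ⟨huv₀, le_refl _⟩
        obtain ⟨t₂, ht₂card, ht₂shape, ht₂cov⟩ :=
          IH (t'.erase s₀) (A ∩ Ioi v₀) v₀ b
            (fun y hy => ⟨hy.2.le, (hsub hy.1).2⟩)
            (fun s hs => hshape s (Finset.mem_of_mem_erase hs))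
            (fun y hy s hs => hdisj y hy.1 s (Finset.mem_of_mem_erase hs))
            (fun x1 y1 h1 h2 h3 h4 h5 => by
              apply hpair x1 y1 h1.1 h2.1 h3 h4
              intro s hs z hzs hzxy
              by_cases hss₀ : s = s₀
              · subst hss₀
                rw [hs₀] at hzs
                have : z ≤ v₀ := hzs.2
                have : v₀ < x1 := h1.2
                have : x1 ≤ z := hzxy.1
                linarith
              · exact h5 s (Finset.mem_erase.2 ⟨hss₀, hs⟩) z hzs hzxy)
            (by
              have hc1 : 1 ≤ t'.card := Finset.card_pos.2 ⟨s₀, hs₀t'⟩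
              have h2 : ((t'.erase s₀).card : ℝ) = (t'.card : ℝ) - 1 := by
                rw [Finset.card_erase_of_mem hs₀t']
                push_cast [hc1]
                ring
              have hv₀x₀ : x₀ ≤ v₀ := le_trans hxmemIcc hv₀x
              have h3 : (b - v₀)/D ≤ (b - x₀)/D := by gcongr <;> linarith
              push_cast at hmeas ⊢
              rw [h2]
              linarith)
        refine ⟨insert (Icc x (x + d)) t₂, ?_, ?_, ?_⟩
        · calc (insert (Icc x (x+d)) t₂).card ≤ t₂.card + 1 := Finset.card_insert_le _ _
            _ ≤ n + 1 + 1 := by omega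
        · intro s hs
          rcases Finset.mem_insert.1 hs with h | h
          · exact ⟨x, h⟩
          · exact ht₂shape s h
        · intro y hy
          simp only [mem_iUnion, Finset.mem_insert]
          rcases lt_or_ge y m with hym | hym
          · exact ⟨_, Or.inl rfl, hxle y hy, hclust y hy hym⟩
          · rw [hmv₀] at hym
            have hyne : y ≠ v₀ := fun h => hdisj y hy s₀ hs₀t' (by rw [h]; exact hv₀mem)
            have : y ∈ A ∩ Ioi v₀ := ⟨hy, lt_of_le_of_ne hym (Ne.symm hyne)⟩
            obtain ⟨s, hs, hys⟩ := mem_iUnion₂.1 (ht₂cov this)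
            exact ⟨s, Or.inr hs, hys⟩
    · -- no interval meets [x, x+D]
      push_neg at hmeet
      have hclust : ∀ y ∈ A, y ≤ x + D → y ≤ x + d := by
        intro y hy hym
        by_contra hcon
        push_neg at hcon
        obtain ⟨x'', hx''A, hx''lt⟩ := happrox (y - (x + d)) (by linarith)
        rcases le_or_gt x'' y with hxy | hxy
        · have : y - x'' ≤ d := by
            apply hpair x'' y hx''A hy hxy
            · have := hxle x'' hx''A
              linarith
            · intro s hs z hzs hzxy
              exact hmeet s hs z hzs ⟨le_trans (hxle x'' hx''A) hzxy.1, le_trans hzxy.2 hym⟩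
          linarith
        · have := hxle y hy
          linarith
      obtain ⟨t₂, ht₂card, ht₂shape, ht₂cov⟩ :=
        IH t' (A ∩ Ioi (x + D)) (x + D) b
          (fun y hy => ⟨hy.2.le, (hsub hy.1).2⟩)
          hshape
          (fun y hy => hdisj y hy.1)
          (fun x1 y1 h1 h2 h3 h4 h5 => hpair x1 y1 h1.1 h2.1 h3 h4 h5)
          (by
            have : (b - (x + D))/D ≤ (b - x₀)/D - 1 := by
              rw [div_sub_one hD.ne', div_le_div_iff_of_pos_right hD]
              linarith
            push_cast at hmeas ⊢
            linarith)
      refine ⟨insert (Icc x (x + d)) t₂, ?_, ?_, ?_⟩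
      · calc (insert (Icc x (x+d)) t₂).card ≤ t₂.card + 1 := Finset.card_insert_le _ _
          _ ≤ n + 1 + 1 := by omega
      · intro s hs
        rcases Finset.mem_insert.1 hs with h | h
        · exact ⟨x, h⟩
        · exact ht₂shape s h
      · intro y hy
        simp only [mem_iUnion, Finset.mem_insert]
        rcases le_or_gt y (x + D) with hym | hym
        · exact ⟨_, Or.inl rfl, hxle y hy, hclust y hy hym⟩
        · have : y ∈ A ∩ Ioi (x + D) := ⟨hy, hym⟩
          obtain ⟨s, hs, hys⟩ := mem_iUnion₂.1 (ht₂cov this)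
          exact ⟨s, Or.inr hs, hys⟩

set_option maxHeartbeats 1600000 in
/-- Higher-order transversality lemma: if `F` is `C^k` on a compact interval `J = [a,b]`
with all derivatives up to order `k` bounded by `M`, and at every point of `J` some
derivative of order `≤ k` exceeds `c` in absolute value (`0 < c < 1`), then for every
`0 < ρ < c/2^k` the set `F⁻¹((-ρ,ρ)) ∩ J` can be covered by at most `C/c²` intervals,
each of length at most `2(ρ/c)^{1/2^k}`, with `C` depending only on `k`, `M`, `|J|`. -/
theorem transversality_covering (k : ℕ) (M L : ℝ) :
    ∃ C : ℝ, ∀ (F : ℝ → ℝ) (a b c ρ : ℝ), a ≤ b → b - a ≤ L →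
      ContDiffOn ℝ k F (Set.Icc a b) →
      (∀ p ≤ k, ∀ x ∈ Set.Icc a b, |iteratedDerivWithin p F (Set.Icc a b) x| ≤ M) →
      0 < c → c < 1 →
      (∀ x ∈ Set.Icc a b, ∃ p ≤ k, c < |iteratedDerivWithin p F (Set.Icc a b) x|) →
      0 < ρ → ρ < c / 2 ^ k →
      ∃ t : Finset (Set ℝ), (t.card : ℝ) ≤ C / c ^ 2 ∧
        (∀ s ∈ t, ∃ u v : ℝ, s = Set.Icc u v ∧
          v - u ≤ 2 * Real.rpow (ρ / c) (1 / 2 ^ k)) ∧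
        (Set.Icc a b ∩ F ⁻¹' Set.Ioo (-ρ) ρ) ⊆ ⋃ s ∈ t, s := by
  refine ⟨2^k * (2*k*M*L + 2) + L + 3, ?_⟩
  intro F a b c ρ hab hbaL hF hM hc hc1 htrans hρ hρc
  classical
  simp only [Real.rpow_eq_pow]
  set G : ℕ → ℝ → ℝ := fun i => iteratedDerivWithin i F (Set.Icc a b) with hG
  have hamem : a ∈ Set.Icc a b := ⟨le_refl a, hab⟩
  obtain ⟨p₀, hp₀k, hp₀⟩ := htrans a hamem
  have hMc : c < M := lt_of_lt_of_le hp₀ (hM p₀ hp₀k a hamem)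
  have hM0 : 0 < M := lt_trans hc hMc
  have hL0 : 0 ≤ L := le_trans (by linarith) hbaL
  set C := 2^k * (2*k*M*L + 2) + L + 3 with hCdef
  have hC3 : L + 3 ≤ C := by
    have h1 : (0:ℝ) ≤ 2*k*M*L := by positivity
    have h2 : (1:ℝ) ≤ 2^k := one_le_pow₀ (by norm_num)
    nlinarith
  have hC0 : (0:ℝ) ≤ C := by linarith
  have hc2 : (0:ℝ) < c^2 := by positivity
  have hc21 : c^2 ≤ 1 := by nlinarith
  have hCC : C ≤ C / c^2 := by
    rw [le_div_iff₀ hc2]; nlinarith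
  have hl0 : (0:ℝ) ≤ 2 * (ρ / c) ^ ((1:ℝ) / 2 ^ k) := by
    have := Real.rpow_nonneg (x := ρ/c) (div_nonneg hρ.le hc.le) (1/2^k)
    linarith
  -- trivial case k = 0
  rcases Nat.eq_zero_or_pos k with hk0 | hk1
  · subst hk0
    refine ⟨∅, by simpa using div_nonneg hC0 hc2.le, by simp, ?_⟩
    rintro x ⟨hx1, hx2⟩
    obtain ⟨p, hp, hpx⟩ := htrans x hx1
    have hp0 : p = 0 := Nat.le_zero.1 hp
    subst hp0
    rw [iteratedDerivWithin_zero] at hpx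
    have h1 : |F x| < ρ := abs_lt.2 ⟨hx2.1, hx2.2⟩
    have h2 : ρ < c := by simpa using hρc
    exact absurd hpx (by push_neg; linarith [abs_nonneg (F x)])
  -- trivial case a = b
  rcases eq_or_lt_of_le hab with heq | hlt
  · refine ⟨{Set.Icc a b}, ?_, ?_, ?_⟩
    · have : (({Set.Icc a b} : Finset (Set ℝ)).card : ℝ) = 1 := by simp
      rw [this]; linarith
    · intro s hs
      rw [Finset.mem_singleton] at hs
      exact ⟨a, b, hs, by rw [← heq]; simp only [sub_self]; exact hl0⟩
    · intro x hx
      exact Set.mem_iUnion₂.2 ⟨Set.Icc a b, Finset.mem_singleton_self _, hx.1⟩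
  -- trivial case: large ρ
  by_cases htriv : ((1:ℝ)/2) ≤ (ρ/c) ^ ((1:ℝ)/2^k)
  · set n := ⌊b - a⌋₊ + 1 with hn
    refine ⟨(Finset.range n).image (fun i : ℕ => Set.Icc (a + i) (a + i + 1)), ?_, ?_, ?_⟩
    · have h1 : (((Finset.range n).image (fun i : ℕ => Set.Icc (a + i) (a + i + 1))).card : ℝ)
          ≤ (n : ℝ) := by exact_mod_cast (Finset.card_image_le.trans (by simp))
      have h2 : (n : ℝ) ≤ (b - a) + 1 := by
        rw [hn]; push_cast
        linarith [Nat.floor_le (sub_nonneg.2 hab)]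
      calc (((Finset.range n).image (fun i : ℕ => Set.Icc (a + i) (a + i + 1))).card : ℝ)
          ≤ (b - a) + 1 := le_trans h1 h2
        _ ≤ C := by linarith
        _ ≤ C / c^2 := hCC
    · intro s hs
      simp only [Finset.mem_image] at hs
      obtain ⟨i, _, rfl⟩ := hs
      exact ⟨a + i, a + i + 1, rfl, by linarith⟩
    · rintro x ⟨hx1, -⟩
      have hxa : (0:ℝ) ≤ x - a := sub_nonneg.2 hx1.1
      refine Set.mem_iUnion₂.2 ⟨Set.Icc (a + ⌊x - a⌋₊) (a + ⌊x - a⌋₊ + 1), ?_, ?_, ?_⟩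
      · simp only [Finset.mem_image]
        refine ⟨⌊x - a⌋₊, Finset.mem_range.2 ?_, rfl⟩
        have := Nat.floor_le_floor (R := ℝ) (sub_le_sub_right hx1.2 a)
        omega
      · linarith [Nat.floor_le hxa]
      · linarith [Nat.lt_floor_add_one (x - a)]
  push_neg at htriv
  -- MAIN CASE
  have hUD : UniqueDiffOn ℝ (Set.Icc a b) := uniqueDiffOn_Icc hlt
  set θ := ρ / c with hθdef
  have hθ0 : 0 < θ := div_pos hρ hc
  have hθ1 : θ < 1 := by
    by_contra hcon
    push_neg at hcon
    have h2 : θ ^ (0:ℝ) ≤ θ ^ ((1:ℝ)/2^k) :=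
      Real.rpow_le_rpow_of_exponent_le hcon (by positivity)
    have h3 : (1:ℝ) ≤ θ ^ ((1:ℝ)/2^k) := by rwa [Real.rpow_zero] at h2
    exact absurd (lt_of_le_of_lt h3 htriv) (by norm_num)
  set e : ℕ → ℝ := fun j => 1 / 2^j with hedef
  have hepos : ∀ j, 0 < e j := fun j => by positivity
  have hed : ∀ j, e j = 2 * e (j+1) := by
    intro j
    show (1:ℝ)/2^j = 2 * (1/2^(j+1))
    rw [pow_succ]
    field_simp
  have hemono : ∀ j, j ≤ k → e k ≤ e j := by
    intro j hj
    apply div_le_div_of_nonneg_left (by norm_num) (by positivity)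
    exact pow_le_pow_right₀ (by norm_num) hj
  set P : ℕ → ℝ := fun j => c * θ ^ (e j) with hPdef
  have hP0 : ∀ j, 0 < P j := fun j => mul_pos hc (Real.rpow_pos_of_pos hθ0 _)
  have hPrel : ∀ j, P j = P (j+1) * θ ^ (e (j+1)) := by
    intro j
    show c * θ ^ (e j) = (c * θ ^ (e (j+1))) * θ ^ (e (j+1))
    rw [hed j, two_mul, Real.rpow_add hθ0]
    ring
  have hPk : θ ^ (e k) < 1/2 := htriv
  have hPi : ∀ i, i < k → θ ^ (e i) ≤ 1/4 := by
    intro i hik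
    have hkey : e i = e k * ((2^(k-i) : ℕ) : ℝ) := by
      have h2 : (2:ℝ)^k = 2^i * 2^(k-i) := by
        rw [← pow_add]
        congr 1
        omega
      show (1:ℝ)/2^i = 1/2^k * ((2^(k-i) : ℕ) : ℝ)
      push_cast
      rw [h2]
      have h3 : (0:ℝ) < 2^i := by positivity
      have h4 : (0:ℝ) < 2^(k-i) := by positivity
      field_simp
    rw [hkey, Real.rpow_mul (le_of_lt hθ0), Real.rpow_natCast]
    have h1 : (θ ^ (e k)) ^ (2^(k-i)) ≤ (1/2 : ℝ) ^ (2^(k-i)) :=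
      pow_le_pow_left₀ (Real.rpow_nonneg hθ0.le _) hPk.le _
    have h2 : ((1:ℝ)/2) ^ (2^(k-i)) ≤ (1/2 : ℝ)^2 := by
      apply pow_le_pow_of_le_one (by norm_num) (by norm_num)
      have : 1 ≤ k - i := by omega
      calc (2:ℕ) = 2^1 := by norm_num
        _ ≤ 2^(k-i) := Nat.pow_le_pow_right (by norm_num) this
    norm_num at h2 ⊢
    linarith
  set τ : ℕ → ℕ → ℝ := fun i j => P i + ((j - i : ℕ) : ℝ) * (c / (2*k)) with hτdef
  have hτk : ∀ i, i ≤ k → τ i k < c := by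
    intro i hik
    rcases eq_or_lt_of_le hik with rfl | hik'
    · show P i + ((i - i : ℕ) : ℝ) * (c / (2*i)) < c
      simp only [Nat.sub_self, Nat.cast_zero, zero_mul, add_zero]
      calc P i = c * θ ^ (e i) := rfl
        _ < c * (1/2) := by
          apply mul_lt_mul_of_pos_left _ hc
          exact hPk
        _ < c := by linarith
    · show P i + ((k - i : ℕ) : ℝ) * (c / (2*k)) < c
      have h1 : P i ≤ c * (1/4) := by
        apply mul_le_mul_of_nonneg_left (hPi i hik') hc.le
      have h2 : ((k - i : ℕ) : ℝ) * (c / (2*k)) ≤ c / 2 := by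
        have hk0 : (0:ℝ) < (k:ℝ) := by exact_mod_cast hk1
        have h3 : ((k - i : ℕ) : ℝ) ≤ (k : ℝ) := by exact_mod_cast Nat.sub_le k i
        have h4 : (0:ℝ) ≤ c / (2*k) := by positivity
        calc ((k - i : ℕ) : ℝ) * (c / (2*k)) ≤ (k:ℝ) * (c / (2*k)) :=
            mul_le_mul_of_nonneg_right h3 h4
          _ = c / 2 := by field_simp
      linarith
  set Y : ℕ → Set ℝ := fun j => {x | x ∈ Set.Icc a b ∧ ∀ i, i ≤ j → |G i x| < τ i j} with hYdef
  have hYk : Y k = ∅ := by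
    rw [Set.eq_empty_iff_forall_notMem]
    rintro x ⟨hx1, hx2⟩
    obtain ⟨p, hpk, hpx⟩ := htrans x hx1
    exact absurd (hx2 p hpk) (by push_neg; linarith [hτk p hpk])
  -- analytic facts
  have hCONT : ∀ i, i ≤ k → ContinuousOn (G i) (Set.Icc a b) := fun i hi =>
    hF.continuousOn_iteratedDerivWithin (by exact_mod_cast hi) hUD
  have hDIFF : ∀ i, i < k → DifferentiableOn ℝ (G i) (Set.Icc a b) := fun i hi =>
    hF.differentiableOn_iteratedDerivWithin (by exact_mod_cast hi) hUD
  have hHDA : ∀ i, i < k → ∀ z ∈ Set.Ioo a b, HasDerivAt (G i) (G (i+1) z) z := by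
    intro i hi z hz
    have hzI : z ∈ Set.Icc a b := Set.Ioo_subset_Icc_self hz
    have h1 : HasDerivWithinAt (G i) (derivWithin (G i) (Set.Icc a b) z) (Set.Icc a b) z :=
      ((hDIFF i hi) z hzI).hasDerivWithinAt
    have h2 : HasDerivAt (G i) (derivWithin (G i) (Set.Icc a b) z) z :=
      h1.hasDerivAt (Icc_mem_nhds hz.1 hz.2)
    rwa [show derivWithin (G i) (Set.Icc a b) z = G (i+1) z from
      (congrFun iteratedDerivWithin_succ z).symm] at h2
  have hMVT : ∀ i, i < k → ∀ x y : ℝ, a ≤ x → x ≤ y → y ≤ b →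
      |G i y - G i x| ≤ M * (y - x) := by
    intro i hi x y hax hxy hyb
    rcases eq_or_lt_of_le hxy with rfl | hlt'
    · simp
    · obtain ⟨ζ, hζ, hslope⟩ := exists_hasDerivAt_eq_slope (G i) (G (i+1)) hlt'
        ((hCONT i (le_of_lt hi)).mono (Set.Icc_subset_Icc hax hyb))
        (fun z hz => hHDA i hi z ⟨lt_of_le_of_lt hax hz.1, lt_of_lt_of_le hz.2 hyb⟩)
      have hζI : ζ ∈ Set.Icc a b := ⟨le_trans hax hζ.1.le, le_trans hζ.2.le hyb⟩
      have hb' := hM (i+1) (Nat.succ_le_of_lt hi) ζ hζI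
      have heq2 : |G i y - G i x| = |G (i+1) ζ| * (y - x) := by
        rw [hslope, abs_div, abs_of_pos (sub_pos.2 hlt'),
          div_mul_cancel₀ _ (sub_pos.2 hlt').ne']
      rw [heq2]
      exact mul_le_mul_of_nonneg_right hb' (by linarith)
  have hGROW : ∀ j, j + 1 ≤ k → ∀ x y : ℝ, a ≤ x → x < y → y ≤ b →
      (∀ z ∈ Set.Icc x y, P (j+1) ≤ |G (j+1) z|) →
      P (j+1) * (y - x) ≤ |G j y - G j x| := by
    intro j hjk x y hax hxy hyb hlow
    obtain ⟨ζ, hζ, hslope⟩ := exists_hasDerivAt_eq_slope (G j) (G (j+1)) hxy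
      ((hCONT j (by omega)).mono (Set.Icc_subset_Icc hax hyb))
      (fun z hz => hHDA j (by omega) z ⟨lt_of_le_of_lt hax hz.1, lt_of_lt_of_le hz.2 hyb⟩)
    have heq2 : |G j y - G j x| = |G (j+1) ζ| * (y - x) := by
      rw [hslope, abs_div, abs_of_pos (sub_pos.2 hxy),
        div_mul_cancel₀ _ (sub_pos.2 hxy).ne']
    rw [heq2]
    exact mul_le_mul_of_nonneg_right (hlow ζ ⟨hζ.1.le, hζ.2.le⟩) (by linarith)
  -- the inductive construction
  set D := c / (2*k*M) with hDdef
  have hk0R : (0:ℝ) < (k:ℝ) := by exact_mod_cast hk1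
  have hD0 : 0 < D := by positivity
  set Q := 2*k*M*L/c with hQdef
  have hQ0 : 0 ≤ Q := by positivity
  have hMD : M * D = c / (2*k) := by
    rw [hDdef]
    field_simp
  have KEY : ∀ m : ℕ, m ≤ k → ∃ t : Finset (Set ℝ),
      ((t.card : ℝ) ≤ (2^m - 1) * (Q + 2)) ∧
      (∀ s ∈ t, ∃ u v : ℝ, s = Set.Icc u v ∧ v - u ≤ 2 * θ ^ (e k)) ∧
      Y (k - m) ⊆ ⋃ s ∈ t, s := by
    intro m
    induction m with
    | zero =>
      intro _
      refine ⟨∅, by norm_num, by simp, ?_⟩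
      rw [Nat.sub_zero, hYk]
      simp
    | succ m IH =>
      intro hmk
      obtain ⟨t', ht'card, ht'shape, ht'cov⟩ := IH (by omega)
      set j := k - (m+1) with hj
      have hjk : j + 1 = k - m := by omega
      have hjk' : j + 1 ≤ k := by omega
      set d := 2 * θ ^ (e (j+1)) with hddef
      have hd0 : 0 ≤ d := by positivity
      set A := Y j \ ⋃ s ∈ t', s with hA
      have hYcov : Y (j+1) ⊆ ⋃ s ∈ t', s := by rw [hjk]; exact ht'cov
      -- the pair property
      have hpair : ∀ x y : ℝ, x ∈ A → y ∈ A → x ≤ y → y - x ≤ D →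
          (∀ s ∈ t', ∀ z ∈ s, z ∉ Set.Icc x y) → y - x ≤ d := by
        intro x y hxA hyA hxy hxyD hdisj
        rcases eq_or_lt_of_le hxy with rfl | hlt'
        · linarith
        have hxI : x ∈ Set.Icc a b := hxA.1.1
        have hyI : y ∈ Set.Icc a b := hyA.1.1
        have hlow : ∀ z ∈ Set.Icc x y, P (j+1) ≤ |G (j+1) z| := by
          intro z hz
          by_contra hcon
          push_neg at hcon
          have hzI : z ∈ Set.Icc a b := ⟨le_trans hxI.1 hz.1, le_trans hz.2 hyI.2⟩
          have hzY : z ∈ Y (j+1) := by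
            refine ⟨hzI, ?_⟩
            intro i hi
            rcases Nat.lt_succ_iff_lt_or_eq.1 (Nat.lt_succ_of_le hi) with hij | hij
            · -- i ≤ j
              have hij' : i ≤ j := by omega
              have h1 : |G i x| < τ i j := hxA.1.2 i hij'
              have h2 : |G i z - G i x| ≤ M * (z - x) :=
                hMVT i (by omega) x z hxI.1 hz.1 hzI.2
              have h3 : M * (z - x) ≤ M * D := by
                apply mul_le_mul_of_nonneg_left _ hM0.le
                have := hz.2
                linarith
              have h4 : τ i (j+1) = τ i j + c/(2*k) := by
                show P i + (((j+1) - i : ℕ) : ℝ) * (c / (2*k)) =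
                  (P i + ((j - i : ℕ) : ℝ) * (c / (2*k))) + c/(2*k)
                have : (j+1) - i = (j - i) + 1 := by omega
                rw [this]
                push_cast
                ring
              have h5 : |G i z| ≤ |G i x| + |G i z - G i x| := by
                have := abs_add_le (G i x) (G i z - G i x)
                simp only [add_sub_cancel] at this
                exact this
              rw [h4]
              rw [hMD] at h3
              calc |G i z| ≤ |G i x| + |G i z - G i x| := h5
                _ ≤ |G i x| + c / (2*(k:ℝ)) := by linarith [h2, h3]
                _ < τ i j + c / (2*(k:ℝ)) := by linarith
            · -- i = j + 1
              rw [hij]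
              have : τ (j+1) (j+1) = P (j+1) := by
                show P (j+1) + (((j+1) - (j+1) : ℕ) : ℝ) * (c / (2*k)) = P (j+1)
                simp
              rw [this]
              exact hcon
          obtain ⟨s, hs, hzs⟩ := Set.mem_iUnion₂.1 (hYcov hzY)
          exact hdisj s hs z hzs hz
        have hgrow := hGROW j hjk' x y hxI.1 hlt' hyI.2 hlow
        have hττ : τ j j = P j := by
          show P j + ((j - j : ℕ) : ℝ) * (c / (2*k)) = P j
          simp
        have hjx : |G j x| < P j := by
          have h := hxA.1.2 j (le_refl j)
          rwa [hττ] at h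
        have hjy : |G j y| < P j := by
          have h := hyA.1.2 j (le_refl j)
          rwa [hττ] at h
        have h6 : |G j y - G j x| ≤ |G j y| + |G j x| := abs_sub _ _
        have h7 : P (j+1) * (y - x) ≤ 2 * P j := by linarith
        rw [hPrel j] at h7
        have h8 : y - x ≤ 2 * θ ^ (e (j+1)) := by
          nlinarith [hP0 (j+1)]
        rw [hddef]
        exact h8
      obtain ⟨t₂, ht₂card, ht₂shape, ht₂cov⟩ :=
        comb_cover d D hD0 hd0 (t'.card + ⌈Q⌉₊) t' A a b
          (fun x hx => hx.1.1)
          (fun s hs => (ht'shape s hs).imp (fun u h => h.imp (fun v h' => h'.1)))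
          (fun x hx s hs hxs => hx.2 (Set.mem_iUnion₂.2 ⟨s, hs, hxs⟩))
          hpair
          (by
            have h1 : (b - a)/D ≤ L/D := by gcongr
            have h2 : L/D = Q := by
              rw [hDdef, hQdef]
              field_simp
            have h3 : Q ≤ (⌈Q⌉₊ : ℝ) := Nat.le_ceil Q
            push_cast
            linarith)
      classical
      refine ⟨t' ∪ t₂, ?_, ?_, ?_⟩
      · have h1 : ((t' ∪ t₂).card : ℝ) ≤ (t'.card : ℝ) + (t₂.card : ℝ) := by
          exact_mod_cast Finset.card_union_le t' t₂

        have h2 : (t₂.card : ℝ) ≤ (t'.card : ℝ) + (⌈Q⌉₊ : ℝ) + 1 := by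
          exact_mod_cast ht₂card
        have h3 : (⌈Q⌉₊ : ℝ) < Q + 1 := Nat.ceil_lt_add_one hQ0
        have h6 : ((t' ∪ t₂).card : ℝ) ≤ 2*(((2:ℝ)^m - 1)*(Q+2)) + (Q + 2) := by linarith
        have h7 : 2*(((2:ℝ)^m - 1)*(Q+2)) + (Q + 2) = (2^(m+1) - 1)*(Q+2) := by ring
        linarith
      · intro s hs
        rcases Finset.mem_union.1 hs with h | h
        · exact ht'shape s h
        · obtain ⟨u, hu⟩ := ht₂shape s h
          refine ⟨u, u + d, hu, ?_⟩
          have h1 : θ ^ (e (j+1)) ≤ θ ^ (e k) :=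
            Real.rpow_le_rpow_of_exponent_ge hθ0 hθ1.le (hemono (j+1) hjk')
          have h2 : u + d - u = d := by ring
          rw [h2, hddef]
          linarith
      · intro x hx
        by_cases hxU : x ∈ ⋃ s ∈ t', s
        · obtain ⟨s, hs, hxs⟩ := Set.mem_iUnion₂.1 hxU
          exact Set.mem_iUnion₂.2 ⟨s, Finset.mem_union_left _ hs, hxs⟩
        · have : x ∈ A := ⟨hx, hxU⟩
          obtain ⟨s, hs, hxs⟩ := Set.mem_iUnion₂.1 (ht₂cov this)
          exact Set.mem_iUnion₂.2 ⟨s, Finset.mem_union_right _ hs, hxs⟩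
  obtain ⟨t, hcard, hshape, hcov⟩ := KEY k (le_refl k)
  refine ⟨t, ?_, ?_, ?_⟩
  · -- cardinality bound
    have h1 : ((2:ℝ)^k - 1) * (Q + 2) ≤ (2^k * (2*k*M*L + 2))/c := by
      rw [le_div_iff₀ hc, hQdef]
      have h2 : (2*k*M*L/c) * c = 2*k*M*L := div_mul_cancel₀ _ hc.ne'
      have h3 : (1:ℝ) ≤ 2^k := one_le_pow₀ (by norm_num)
      have h4 : (0:ℝ) ≤ 2*k*M*L := by positivity
      nlinarith
    have h5 : (2^k * (2*k*M*L + 2))/c ≤ C/c^2 := by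
      rw [div_le_div_iff₀ hc hc2]
      have h6 : 2^k * (2*k*M*L + 2) ≤ C := by rw [hCdef]; linarith
      have h7 : (0:ℝ) ≤ 2^k * (2*k*M*L + 2) := by positivity
      have h9 : c^2 ≤ c := by nlinarith
      calc 2^k * (2*(k:ℝ)*M*L + 2) * c^2 ≤ 2^k * (2*(k:ℝ)*M*L + 2) * c :=
            mul_le_mul_of_nonneg_left h9 h7
        _ ≤ C * c := mul_le_mul_of_nonneg_right h6 hc.le
    linarith
  · intro s hs
    obtain ⟨u, v, h1, h2⟩ := hshape s hs
    exact ⟨u, v, h1, h2⟩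
  · intro x hx
    apply hcov
    rw [Nat.sub_self]
    refine ⟨hx.1, ?_⟩
    intro i hi
    have hi0 : i = 0 := Nat.le_zero.1 hi
    subst hi0
    have h1 : |G 0 x| = |F x| := by
      show |iteratedDerivWithin 0 F (Set.Icc a b) x| = |F x|
      rw [iteratedDerivWithin_zero]
    have h2 : |F x| < ρ := abs_lt.2 ⟨hx.2.1, hx.2.2⟩
    have h3 : τ 0 0 = ρ := by
      show P 0 + ((0 - 0 : ℕ) : ℝ) * (c / (2*k)) = ρ
      simp only [Nat.sub_self, Nat.cast_zero, zero_mul, add_zero]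
      show c * θ ^ (e 0) = ρ
      have : e 0 = 1 := by simp [hedef]
      rw [this, Real.rpow_one, hθdef]
      field_simp
    rw [h1, h3]
    exact h2
end
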